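/- Let m₂ < m₁ be nonnegative integers and let 0 < a < b. With f(x) = 1/x and P, Q the Hermite interpolants of degree ≤ n = m₁+m₂+1 (P matches f to order m₁ at a and m₂ at b; Q matches to order m₂ at a and m₁ at b), the unique solution x₀ ∈ (a,b) of (f-P)(x) = (-1)^{m₁-m₂}(f-Q)(x) equals the harmonic mean 2ab/(a+b). -/

import Mathlib

open Polynomial

lemma iterDerivPolyEval (p : ℝ[X]) : ∀ j, deriv^[j] (fun x => p.eval x) = fun x => (derivative^[j] p).eval x := by
  intro j
  induction j with
  | zero => simp
  | succ n ih =>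
    rw [Function.iterate_succ_apply', ih, Function.iterate_succ_apply']
    funext x
    exact (derivative^[n] p).deriv

lemma iterXmul (p : ℝ[X]) : ∀ n : ℕ, derivative^[n+1] (X*p) = X * derivative^[n+1] p + C ((n:ℝ)+1) * derivative^[n] p := by
  intro n
  induction n with
  | zero => simp [derivative_mul]; ring
  | succ n ih =>
    rw [Function.iterate_succ_apply', ih, derivative_add, derivative_mul,
      derivative_mul, derivative_X, derivative_C,
      ← Function.iterate_succ_apply' (f := (derivative (R := ℝ) : ℝ[X] → ℝ[X])) (n := n+1) (x := p),
      ← Function.iterate_succ_apply' (f := (derivative (R := ℝ) : ℝ[X] → ℝ[X])) (n := n) (x := p)]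
    push_cast
    simp only [C_add, C_1]
    ring

lemma invDeriv (r : ℝ) (j : ℕ) : iteratedDeriv j (fun x:ℝ => 1/x) r = (∏ i ∈ Finset.range j, (-1-i:ℝ)) * r ^ (-1-(j:ℤ)) := by
  have h : (fun x:ℝ => 1/x) = Inv.inv := by funext x; simp
  rw [h, iteratedDeriv_eq_iterate, iter_deriv_inv]
  congr 1
  induction j with
  | zero => simp
  | succ n ih =>
    rw [Finset.prod_range_succ, ← ih, pow_succ, Nat.factorial_succ]
    push_cast
    ring

lemma auxRoot (r : ℝ) (hr : r ≠ 0) (m : ℕ) (P : ℝ[X])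
    (h : ∀ j ≤ m, (derivative^[j] P).eval r = iteratedDeriv j (fun x:ℝ => 1/x) r) :
    ∀ j ≤ m, (derivative^[j] ((1:ℝ[X]) - X*P)).IsRoot r := by
  intro j hj
  cases j with
  | zero =>
    have h0 := h 0 (Nat.zero_le _)
    simp only [Function.iterate_zero, id_eq] at h0 ⊢
    rw [iteratedDeriv_zero] at h0
    simp [IsRoot, h0]
    field_simp
    norm_num
  | succ n =>
    have hsub : derivative^[n+1] ((1:ℝ[X]) - X*P) = - derivative^[n+1] (X*P) := by
      rw [iterate_derivative_sub, iterate_derivative_one (Nat.succ_pos n), zero_sub]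
    rw [IsRoot, hsub, iterXmul]
    have hn1 := h (n+1) hj
    have hn := h n (le_trans (Nat.le_succ n) hj)
    rw [invDeriv] at hn1 hn
    simp only [eval_neg, eval_add, eval_mul, eval_X, eval_C, hn1, hn]
    have hz : r * r ^ (-1-((n:ℤ)+1)) = r ^ (-1-(n:ℤ)) := by
      rw [show (-1-((n:ℤ)+1)) = (-1-(n:ℤ)) + (-1) by ring, zpow_add₀ hr, zpow_neg_one]
      field_simp
    have hprod : (∏ i ∈ Finset.range (n+1), (-1-i:ℝ)) = (∏ i ∈ Finset.range n, (-1-i:ℝ)) * (-1-(n:ℝ)) :=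
      Finset.prod_range_succ _ _
    push_cast
    rw [hprod]
    rw [show r * ((∏ i ∈ Finset.range n, (-1-i:ℝ)) * (-1-(n:ℝ)) * r ^ (-1-((n:ℤ)+1)))
        = ((∏ i ∈ Finset.range n, (-1-i:ℝ)) * (-1-(n:ℝ))) * (r * r ^ (-1-((n:ℤ)+1))) by ring, hz]
    ring

lemma hermKey (m k : ℕ) (a b : ℝ) (ha : 0 < a) (hb : 0 < b) (hne : a ≠ b)
    (P : ℝ[X]) (hdeg : P.natDegree ≤ m + k + 1)
    (hA : ∀ j ≤ m, (derivative^[j] P).eval a = iteratedDeriv j (fun x:ℝ => 1/x) a)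
    (hB : ∀ j ≤ k, (derivative^[j] P).eval b = iteratedDeriv j (fun x:ℝ => 1/x) b) :
    ∀ x : ℝ, (1 - x * P.eval x) * (a^(m+1) * b^(k+1)) = (a-x)^(m+1) * (b-x)^(k+1) := by
  set g : ℝ[X] := 1 - X * P with hg
  have hg0 : g.eval 0 = 1 := by simp [hg]
  have hgne : g ≠ 0 := fun h => by simp [h] at hg0
  have hra : (X - C a)^(m+1) ∣ g := by
    have h1 : m < g.rootMultiplicity a :=
      Polynomial.lt_rootMultiplicity_of_isRoot_iterate_derivative hgne (auxRoot a ha.ne' m P hA)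
    exact dvd_trans (pow_dvd_pow _ h1) (g.pow_rootMultiplicity_dvd a)
  have hrb : (X - C b)^(k+1) ∣ g := by
    have h1 : k < g.rootMultiplicity b :=
      Polynomial.lt_rootMultiplicity_of_isRoot_iterate_derivative hgne (auxRoot b hb.ne' k P hB)
    exact dvd_trans (pow_dvd_pow _ h1) (g.pow_rootMultiplicity_dvd b)
  have hco : IsCoprime ((X - C a)^(m+1)) ((X - C b)^(k+1)) :=
    (isCoprime_X_sub_C_of_isUnit_sub (isUnit_iff_ne_zero.mpr (sub_ne_zero.mpr hne))).pow
  obtain ⟨q, hq⟩ := hco.mul_dvd hra hrb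
  have hq0 : q ≠ 0 := by rintro rfl; rw [mul_zero] at hq; exact hgne hq
  have hXa : ((X : ℝ[X]) - C a) ≠ 0 := X_sub_C_ne_zero a
  have hXb : ((X : ℝ[X]) - C b) ≠ 0 := X_sub_C_ne_zero b
  have hdg : g.natDegree ≤ m + k + 2 := by
    have h1 : (X * P : ℝ[X]).natDegree ≤ 1 + P.natDegree := by
      simpa using natDegree_mul_le (p := (X:ℝ[X])) (q := P)
    have h2 := natDegree_sub_le (1 : ℝ[X]) (X * P)
    simp only [natDegree_one] at h2
    calc g.natDegree ≤ max 0 (X*P : ℝ[X]).natDegree := h2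
      _ ≤ max 0 (1 + P.natDegree) := by exact max_le_max (le_refl 0) h1
      _ ≤ m + k + 2 := by simp; omega
  have hdq : q.natDegree = 0 := by
    have h3 : g.natDegree = (m+1) + (k+1) + q.natDegree := by
      rw [hq, natDegree_mul (mul_ne_zero (pow_ne_zero _ hXa) (pow_ne_zero _ hXb)) hq0,
        natDegree_mul (pow_ne_zero _ hXa) (pow_ne_zero _ hXb), natDegree_pow, natDegree_pow,
        natDegree_X_sub_C, natDegree_X_sub_C]
      ring
    omega
  obtain ⟨c, hc⟩ : ∃ c, q = C c := ⟨q.coeff 0, eq_C_of_natDegree_eq_zero hdq⟩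
  have heval : ∀ x : ℝ, 1 - x * P.eval x = (x-a)^(m+1) * (x-b)^(k+1) * c := by
    intro x
    have h4 := congrArg (eval x) hq
    simp only [hg, hc, eval_sub, eval_one, eval_mul, eval_X, eval_pow, eval_C] at h4
    exact h4
  have h0 : (-a)^(m+1) * (-b)^(k+1) * c = 1 := by
    have h5 := heval 0
    simp only [zero_mul, sub_zero, zero_sub] at h5
    exact h5.symm
  intro x
  rw [heval x]
  calc (x-a)^(m+1) * (x-b)^(k+1) * c * (a^(m+1) * b^(k+1))
      = ((x-a)*a)^(m+1) * ((x-b)*b)^(k+1) * c := by rw [mul_pow, mul_pow]; ring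
    _ = ((a-x)*(-a))^(m+1) * ((b-x)*(-b))^(k+1) * c := by
        rw [show (x-a)*a = (a-x)*(-a) by ring, show (x-b)*b = (b-x)*(-b) by ring]
    _ = (a-x)^(m+1) * (b-x)^(k+1) * ((-a)^(m+1) * (-b)^(k+1) * c) := by
        rw [mul_pow, mul_pow]; ring
    _ = (a-x)^(m+1) * (b-x)^(k+1) := by rw [h0, mul_one]

theorem stmt7 (m₁ m₂ : ℕ) (hm : m₂ < m₁) (a b : ℝ) (ha : 0 < a) (hab : a < b)
    (f : ℝ → ℝ) (hfdef : f = fun x => 1 / x)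
    (P Q : Polynomial ℝ) (hPdeg : P.natDegree ≤ m₁ + m₂ + 1) (hQdeg : Q.natDegree ≤ m₁ + m₂ + 1)
    (hPa : ∀ j ≤ m₁, iteratedDeriv j (fun t => P.eval t) a = iteratedDeriv j f a)
    (hPb : ∀ j ≤ m₂, iteratedDeriv j (fun t => P.eval t) b = iteratedDeriv j f b)
    (hQa : ∀ j ≤ m₂, iteratedDeriv j (fun t => Q.eval t) a = iteratedDeriv j f a)
    (hQb : ∀ j ≤ m₁, iteratedDeriv j (fun t => Q.eval t) b = iteratedDeriv j f b) :
    ∀ x ∈ Set.Ioo a b,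
      (f x - P.eval x = (-1 : ℝ) ^ (m₁ - m₂) * (f x - Q.eval x) ↔ x = 2 * a * b / (a + b)) := by
  have hb0 : 0 < b := ha.trans hab
  have hconv : ∀ (R : ℝ[X]) (r : ℝ) (M : ℕ),
      (∀ j ≤ M, iteratedDeriv j (fun t => R.eval t) r = iteratedDeriv j f r) →
      (∀ j ≤ M, (derivative^[j] R).eval r = iteratedDeriv j (fun x : ℝ => 1/x) r) := by
    intro R r M h j hj
    have h1 := h j hj
    rw [iteratedDeriv_eq_iterate, iterDerivPolyEval, hfdef] at h1
    exact h1
  have hP := hermKey m₁ m₂ a b ha hb0 (ne_of_lt hab) P hPdeg (hconv P a m₁ hPa) (hconv P b m₂ hPb)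
  have hQ := hermKey m₂ m₁ a b ha hb0 (ne_of_lt hab) Q (by omega) (hconv Q a m₂ hQa) (hconv Q b m₁ hQb)
  intro x hx
  obtain ⟨hax, hxb⟩ := hx
  have hx0 : 0 < x := ha.trans hax
  have hxa : 0 < x - a := sub_pos.mpr hax
  have hbx : 0 < b - x := sub_pos.mpr hxb
  set k := m₁ - m₂ with hk
  have hk0 : k ≠ 0 := by omega
  have hm1 : m₁ + 1 = (m₂ + 1) + k := by omega
  have hc : x * ((a^(m₁+1) * b^(m₂+1)) * (a^(m₂+1) * b^(m₁+1))) ≠ 0 := by positivity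
  have e1 := (mul_left_inj' (a := f x - P.eval x)
    (b := (-1:ℝ)^k * (f x - Q.eval x)) hc).symm
  have h1P : (f x - P.eval x) * x = 1 - x * P.eval x := by
    rw [hfdef]; field_simp
  have h1Q : (f x - Q.eval x) * x = 1 - x * Q.eval x := by
    rw [hfdef]; field_simp
  have hl : (f x - P.eval x) * (x * ((a^(m₁+1) * b^(m₂+1)) * (a^(m₂+1) * b^(m₁+1))))
      = ((a-x)^(m₁+1) * (b-x)^(m₂+1)) * (a^(m₂+1) * b^(m₁+1)) := by
    calc (f x - P.eval x) * (x * ((a^(m₁+1) * b^(m₂+1)) * (a^(m₂+1) * b^(m₁+1))))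
        = ((f x - P.eval x) * x) * (a^(m₁+1) * b^(m₂+1)) * (a^(m₂+1) * b^(m₁+1)) := by ring
      _ = ((1 - x * P.eval x) * (a^(m₁+1) * b^(m₂+1))) * (a^(m₂+1) * b^(m₁+1)) := by rw [h1P]
      _ = ((a-x)^(m₁+1) * (b-x)^(m₂+1)) * (a^(m₂+1) * b^(m₁+1)) := by rw [hP x]
  have hr : ((-1:ℝ)^k * (f x - Q.eval x)) * (x * ((a^(m₁+1) * b^(m₂+1)) * (a^(m₂+1) * b^(m₁+1))))
      = (-1:ℝ)^k * (((a-x)^(m₂+1) * (b-x)^(m₁+1)) * (a^(m₁+1) * b^(m₂+1))) := by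
    calc ((-1:ℝ)^k * (f x - Q.eval x)) * (x * ((a^(m₁+1) * b^(m₂+1)) * (a^(m₂+1) * b^(m₁+1))))
        = (-1:ℝ)^k * (((f x - Q.eval x) * x) * (a^(m₂+1) * b^(m₁+1)) * (a^(m₁+1) * b^(m₂+1))) := by ring
      _ = (-1:ℝ)^k * (((1 - x * Q.eval x) * (a^(m₂+1) * b^(m₁+1))) * (a^(m₁+1) * b^(m₂+1))) := by rw [h1Q]
      _ = (-1:ℝ)^k * (((a-x)^(m₂+1) * (b-x)^(m₁+1)) * (a^(m₁+1) * b^(m₂+1))) := by rw [hQ x]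
  have hDne : ((-1:ℝ)^(m₂+1) * (-1:ℝ)^k * ((x-a)^(m₂+1) * (b-x)^(m₂+1) * a^(m₂+1) * b^(m₂+1))) ≠ 0 := by
    apply mul_ne_zero
    · exact mul_ne_zero (pow_ne_zero _ (by norm_num)) (pow_ne_zero _ (by norm_num))
    · positivity
  have hL2 : ((a-x)^(m₁+1) * (b-x)^(m₂+1)) * (a^(m₂+1) * b^(m₁+1))
      = ((-1:ℝ)^(m₂+1) * (-1:ℝ)^k * ((x-a)^(m₂+1) * (b-x)^(m₂+1) * a^(m₂+1) * b^(m₂+1))) * ((x-a)*b)^k := by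
    rw [hm1, show a - x = -(x-a) by ring]
    simp only [pow_add, neg_pow (x-a), mul_pow]
    ring
  have hR2 : (-1:ℝ)^k * (((a-x)^(m₂+1) * (b-x)^(m₁+1)) * (a^(m₁+1) * b^(m₂+1)))
      = ((-1:ℝ)^(m₂+1) * (-1:ℝ)^k * ((x-a)^(m₂+1) * (b-x)^(m₂+1) * a^(m₂+1) * b^(m₂+1))) * ((b-x)*a)^k := by
    rw [hm1, show a - x = -(x-a) by ring]
    simp only [pow_add, neg_pow (x-a), mul_pow]
    ring
  have final : ((x-a)*b)^k = ((b-x)*a)^k ↔ x = 2*a*b/(a+b) := by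
    constructor
    · intro h
      have h2 : (x-a)*b = (b-x)*a :=
        (pow_left_inj₀ (by positivity) (by positivity) hk0).mp h
      rw [eq_div_iff (by positivity : a + b ≠ 0)]
      linear_combination h2
    · intro h
      have h2 : (x-a)*b = (b-x)*a := by
        rw [h]; field_simp; ring
      rw [h2]
  rw [e1, hl, hr, hL2, hR2, mul_right_inj' hDne]
  exact final
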